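/- (Finite L¹ covering number of the monotone class.) Let Tmax > 0, B ≥ 1, δ > 0, and let ν be a finite Borel measure on [0, Tmax). There exist finitely many non-decreasing functions w_1, …, w_K : [0, Tmax) → [1, B] such that every non-decreasing function w : [0, Tmax) → [1, B] satisfies min_{1≤k≤K} ∫_{[0,Tmax)} | w − w_k | dν ≤ δ. -/

import Mathlib

open MeasureTheory Set
open scoped ENNReal

lemma aux_quantile (μ : Measure ℝ) [IsFiniteMeasure μ] (Tmax : ℝ) (hT : 0 < Tmax)
    (hsupp : μ (Iio 0) = 0) (hfull : μ univ ≤ μ (Iio Tmax)) (N : ℕ) (hN : 0 < N) :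
    ∃ a : ℕ → ℝ, a 0 = 0 ∧ (∀ i j, i ≤ j → j ≤ N → a i ≤ a j) ∧
      (∀ i, i ≤ N → 0 ≤ a i ∧ a i ≤ Tmax) ∧
      (∀ i, i ≤ N → μ (Iio (a i)) ≤ (i : ℝ≥0∞) * (μ univ / N)) ∧
      (∀ i, i ≤ N → (i : ℝ≥0∞) * (μ univ / N) ≤ μ (Iic (a i))) := by
  set c := μ univ / N with hc
  have hcN : (N : ℝ≥0∞) * c = μ univ :=
    ENNReal.mul_div_cancel (by exact_mod_cast hN.ne') (ENNReal.natCast_ne_top N)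
  set S : ℕ → Set ℝ := fun i => {x | 0 ≤ x ∧ (i : ℝ≥0∞) * c ≤ μ (Iio x)} with hS
  have hTmem : ∀ i, i ≤ N → Tmax ∈ S i := by
    intro i hi
    refine ⟨hT.le, le_trans (le_trans ?_ hcN.le) hfull⟩
    exact mul_le_mul_left (by exact_mod_cast hi) c
  have hne : ∀ i, i ≤ N → (S i).Nonempty := fun i hi => ⟨Tmax, hTmem i hi⟩
  have hbdd : ∀ i, BddBelow (S i) := fun i => ⟨0, fun x hx => hx.1⟩
  set a : ℕ → ℝ := fun i => sInf (S i) with ha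
  have ha0 : a 0 = 0 := by
    have : S 0 = Ici 0 := by ext x; simp [hS]
    simp [ha, this, csInf_Ici]
  have hanneg : ∀ i, i ≤ N → 0 ≤ a i := fun i hi =>
    le_csInf (hne i hi) (fun x hx => hx.1)
  have haT : ∀ i, i ≤ N → a i ≤ Tmax := fun i hi => csInf_le (hbdd i) (hTmem i hi)
  have hmono : ∀ i j, i ≤ j → j ≤ N → a i ≤ a j := by
    intro i j hij hj
    refine csInf_le_csInf (hbdd i) (hne j hj) ?_
    intro x hx
    exact ⟨hx.1, le_trans (mul_le_mul_left (by exact_mod_cast hij) c) hx.2⟩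
  refine ⟨a, ha0, hmono, fun i hi => ⟨hanneg i hi, haT i hi⟩, ?_, ?_⟩
  · -- μ (Iio (a i)) ≤ i * c
    intro i hi
    have hU : Iio (a i) = ⋃ n : ℕ, Iio (a i - 1 / (n + 1)) := by
      ext x
      simp only [mem_Iio, mem_iUnion]
      constructor
      · intro hx
        obtain ⟨n, hn⟩ := exists_nat_one_div_lt (sub_pos.2 hx)
        exact ⟨n, by linarith⟩
      · rintro ⟨n, hn⟩
        have : (0:ℝ) < 1 / (n + 1) := by positivity
        linarith
    have hdir : Directed (fun x1 x2 => x1 ⊆ x2) (fun n : ℕ => Iio (a i - 1 / (n + 1))) := by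
      refine (directed_of_isDirected_le ?_)
      intro m n hmn
      apply Iio_subset_Iio
      have h1 : (1:ℝ) / (n + 1) ≤ 1 / (m + 1) := by
        apply one_div_le_one_div_of_le (by positivity)
        exact_mod_cast by omega
      linarith
    rw [hU, hdir.measure_iUnion]
    refine iSup_le fun n => ?_
    have hx : a i - 1 / (n + 1) ∉ S i := by
      intro hmem
      have := csInf_le (hbdd i) hmem
      have hp : (0:ℝ) < 1 / (n + 1) := by positivity
      have h2 : a i ≤ a i - 1 / (n + 1) := this
      linarith
    rcases le_or_gt 0 (a i - 1 / (n+1)) with h0 | h0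
    · have : ¬ ((i : ℝ≥0∞) * c ≤ μ (Iio (a i - 1 / (n + 1)))) := fun h => hx ⟨h0, h⟩
      exact (not_le.mp this).le
    · have : Iio (a i - 1 / (n+1)) ⊆ Iio 0 := Iio_subset_Iio h0.le
      calc μ (Iio (a i - 1 / (n+1))) ≤ μ (Iio 0) := measure_mono this
        _ = 0 := hsupp
        _ ≤ _ := zero_le
  · -- i * c ≤ μ (Iic (a i))
    intro i hi
    have hI : Iic (a i) = ⋂ n : ℕ, Iio (a i + 1 / (n + 1)) := by
      ext x
      simp only [mem_Iic, mem_iInter, mem_Iio]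
      constructor
      · intro hx n
        have : (0:ℝ) < 1 / (n + 1) := by positivity
        linarith
      · intro hx
        by_contra hcon
        push_neg at hcon
        obtain ⟨n, hn⟩ := exists_nat_one_div_lt (sub_pos.2 hcon)
        have := hx n
        linarith
    have hdir : Directed (fun x1 x2 => x1 ⊇ x2) (fun n : ℕ => Iio (a i + 1 / (n + 1))) := by
      refine (directed_of_isDirected_le ?_)
      intro m n hmn
      apply Iio_subset_Iio
      have h1 : (1:ℝ) / (n + 1) ≤ 1 / (m + 1) := by
        apply one_div_le_one_div_of_le (by positivity)
        exact_mod_cast by omega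
      linarith
    rw [hI, hdir.measure_iInter (fun n => measurableSet_Iio.nullMeasurableSet)
      ⟨0, measure_ne_top μ _⟩]
    refine le_iInf fun n => ?_
    have hlt : a i < a i + 1 / (n + 1) := by
      have : (0:ℝ) < 1 / (n + 1) := by positivity
      linarith
    obtain ⟨z, hz, hzlt⟩ := exists_lt_of_csInf_lt (hne i hi) (show sInf (S i) < a i + 1 / (n+1) from hlt)
    exact le_trans hz.2 (measure_mono (Iio_subset_Iio hzlt.le))

set_option maxHeartbeats 2000000 in
theorem stmt_11 (Tmax B δ : ℝ) (hTmax : 0 < Tmax) (hB : 1 ≤ B) (hδ : 0 < δ)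
    (ν : Measure ℝ) [IsFiniteMeasure ν] :
    ∃ (K : ℕ) (w : Fin K → ℝ → ℝ),
      (∀ k, MonotoneOn (w k) (Set.Ico (0 : ℝ) Tmax) ∧
        ∀ t ∈ Set.Ico (0 : ℝ) Tmax, w k t ∈ Set.Icc (1 : ℝ) B) ∧
      ∀ v : ℝ → ℝ, MonotoneOn v (Set.Ico (0 : ℝ) Tmax) →
        (∀ t ∈ Set.Ico (0 : ℝ) Tmax, v t ∈ Set.Icc (1 : ℝ) B) →
        ∃ k : Fin K, ∫ t in Set.Ico (0 : ℝ) Tmax, |v t - w k t| ∂ν ≤ δ := by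
  classical
  set D := Set.Ico (0:ℝ) Tmax with hD
  set μ := ν.restrict D with hμ
  have hDmeas : MeasurableSet D := measurableSet_Ico
  have hsupp : μ (Iio 0) = 0 := by
    rw [hμ, Measure.restrict_apply measurableSet_Iio]
    have : Iio (0:ℝ) ∩ D = ∅ := by
      ext x
      simp only [hD, mem_inter_iff, mem_Iio, mem_Ico, mem_empty_iff_false, iff_false, not_and]
      intro h1 h2
      linarith
    rw [this, measure_empty]
  have hfull : μ univ ≤ μ (Iio Tmax) := by
    rw [hμ, Measure.restrict_apply measurableSet_Iio, Measure.restrict_apply MeasurableSet.univ]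
    refine measure_mono ?_
    rw [univ_inter]
    intro x hx
    exact ⟨hx.2, hx⟩
  set Creal := (μ univ).toReal with hCreal
  have hC0 : 0 ≤ Creal := ENNReal.toReal_nonneg
  set ε := δ / (2 * (Creal + 1)) with hεdef
  have hε : 0 < ε := by rw [hεdef]; positivity
  set N := ⌈2 * (B - 1) * (Creal + 1) / δ⌉₊ + 1 with hNdef
  have hN : 0 < N := Nat.succ_pos _
  set M := ⌊(B - 1) / ε⌋₊ with hMdef
  obtain ⟨a, ha0, hamono, habd, haIio, haIic⟩ := aux_quantile μ Tmax hTmax hsupp hfull N hN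
  set c := μ univ / (N : ℝ≥0∞) with hc
  have hcN : (N : ℝ≥0∞) * c = μ univ :=
    ENNReal.mul_div_cancel (by exact_mod_cast hN.ne') (ENNReal.natCast_ne_top N)
  have hcne : c ≠ ⊤ := (ENNReal.div_lt_top (measure_ne_top μ _) (by exact_mod_cast hN.ne')).ne
  set A : ℕ → ℝ := fun j => if j ≤ N then a j else Tmax with hA
  have hA0 : A 0 = 0 := by simp only [hA, if_pos (Nat.zero_le N), ha0]
  have hAnneg : ∀ j, 0 ≤ A j := by
    intro j
    by_cases h : j ≤ N
    · simpa only [hA, if_pos h] using (habd j h).1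
    · simpa only [hA, if_neg h] using hTmax.le
  have hAT : ∀ j, A j ≤ Tmax := by
    intro j
    by_cases h : j ≤ N
    · simpa only [hA, if_pos h] using (habd j h).2
    · simp only [hA, if_neg h, le_refl]
  have hAmono : Monotone A := by
    intro i j hij
    by_cases hj : j ≤ N
    · have hi : i ≤ N := le_trans hij hj
      simpa only [hA, if_pos hi, if_pos hj] using hamono i j hij hj
    · simp only [hA, if_neg hj]
      exact hAT i
  have hANsucc : A (N+1) = Tmax := by simp only [hA, if_neg (by omega : ¬ N+1 ≤ N)]
  have hIoo : ∀ j, j ≤ N → μ (Set.Ioo (A j) (A (j+1))) ≤ c := by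
    intro j hj
    rcases eq_or_lt_of_le hj with hjN | hjN
    · -- j = N
      have hAj : A j = a j := by simp only [hA, if_pos hj]
      have h1 : μ (Iic (A j)) = μ univ := by
        refine le_antisymm (measure_mono (subset_univ _)) ?_
        calc μ univ = (N : ℝ≥0∞) * c := hcN.symm
          _ = (j : ℝ≥0∞) * c := by rw [hjN]
          _ ≤ μ (Iic (a j)) := haIic j hj
          _ = μ (Iic (A j)) := by rw [hAj]
      have h2 : μ (Ioi (A j)) = 0 := by
        have h3 := measure_add_measure_compl (μ := μ) (measurableSet_Iic (a := A j))
        rw [compl_Iic, h1] at h3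
        have h4 : μ (Iic (A j)) + μ (Ioi (A j)) = μ (Iic (A j)) + 0 := by
          rw [add_zero, h1]; exact h3
        exact ((ENNReal.add_right_inj (measure_ne_top μ _)).mp h4)
      calc μ (Set.Ioo (A j) (A (j+1))) ≤ μ (Ioi (A j)) := measure_mono Ioo_subset_Ioi_self
        _ = 0 := h2
        _ ≤ c := zero_le
    · -- j < N
      have hj1 : j + 1 ≤ N := hjN
      rcases lt_or_ge (A j) (A (j+1)) with hlt | hle
      · have hun : Iic (A j) ∪ Set.Ioo (A j) (A (j+1)) = Iio (A (j+1)) :=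
          Iic_union_Ioo_eq_Iio hlt
        have hdisj : Disjoint (Iic (A j)) (Set.Ioo (A j) (A (j+1))) :=
          (Iic_disjoint_Ioi le_rfl).mono_right Ioo_subset_Ioi_self
        have hsum : μ (Iic (A j)) + μ (Set.Ioo (A j) (A (j+1))) = μ (Iio (A (j+1))) := by
          rw [← measure_union hdisj measurableSet_Ioo, hun]
        have hup : μ (Iio (A (j+1))) ≤ (j : ℝ≥0∞) * c + c := by
          have := haIio (j+1) hj1
          simp only [hA, if_pos hj1] at *
          calc μ (Iio (a (j+1))) ≤ ((j+1 : ℕ) : ℝ≥0∞) * c := this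
            _ = (j : ℝ≥0∞) * c + c := by push_cast; ring
        have hlo : (j : ℝ≥0∞) * c ≤ μ (Iic (A j)) := by
          have := haIic j (le_of_lt hjN)
          simpa only [hA, if_pos (le_of_lt hjN)] using this
        have : (j : ℝ≥0∞) * c + μ (Set.Ioo (A j) (A (j+1))) ≤ (j : ℝ≥0∞) * c + c :=
          le_trans (add_le_add_left hlo _) (hsum ▸ hup)
        exact (ENNReal.add_le_add_iff_left
          (ENNReal.mul_ne_top (ENNReal.natCast_ne_top j) hcne)).mp this
      · rw [Set.Ioo_eq_empty (not_lt.mpr hle), measure_empty]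
        exact zero_le
  -- the covering family
  set W : (Fin (N+1) → Fin (M+1)) → ℝ → ℝ := fun cc t =>
    1 + ε * (((Finset.univ.filter fun i : Fin (N+1) => A (i:ℕ) ≤ t).sup
      fun i => (cc i : ℕ) : ℕ) : ℝ) with hW
  have hWmono : ∀ cc, Monotone (W cc) := by
    intro cc s t hst
    simp only [hW]
    have hsub : (Finset.univ.filter fun i : Fin (N+1) => A (i:ℕ) ≤ s) ⊆
        (Finset.univ.filter fun i : Fin (N+1) => A (i:ℕ) ≤ t) := by
      intro i hi
      rw [Finset.mem_filter] at hi ⊢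
      exact ⟨hi.1, le_trans hi.2 hst⟩
    have := Finset.sup_mono (f := fun i : Fin (N+1) => (cc i : ℕ)) hsub
    have hcast : ((((Finset.univ.filter fun i : Fin (N+1) => A (i:ℕ) ≤ s)).sup
        fun i => (cc i : ℕ) : ℕ) : ℝ) ≤
        (((Finset.univ.filter fun i : Fin (N+1) => A (i:ℕ) ≤ t)).sup
        fun i => (cc i : ℕ) : ℕ) := Nat.cast_le.2 this
    nlinarith [hε.le]
  have hW1 : ∀ cc t, 1 ≤ W cc t := by
    intro cc t
    simp only [hW]
    have h : (0:ℝ) ≤ ε * (((Finset.univ.filter fun i : Fin (N+1) => A (i:ℕ) ≤ t).sup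
        fun i => (cc i : ℕ) : ℕ) : ℝ) := mul_nonneg hε.le (Nat.cast_nonneg _)
    linarith
  have hWB : ∀ cc t, W cc t ≤ B := by
    intro cc t
    simp only [hW]
    have hsupM : ((Finset.univ.filter fun i : Fin (N+1) => A (i:ℕ) ≤ t).sup
        fun i => (cc i : ℕ)) ≤ M :=
      Finset.sup_le fun i _ => Nat.lt_succ_iff.mp (cc i).isLt
    have h1 : (((Finset.univ.filter fun i : Fin (N+1) => A (i:ℕ) ≤ t).sup
        fun i => (cc i : ℕ) : ℕ) : ℝ) ≤ (M : ℝ) := Nat.cast_le.2 hsupM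
    have h2 : (M : ℝ) ≤ (B - 1) / ε := by
      rw [hMdef]
      exact Nat.floor_le (div_nonneg (by linarith) hε.le)
    have h3 : ε * ((B - 1) / ε) = B - 1 := by
      field_simp
    nlinarith [hε.le, hε]
  refine ⟨Fintype.card (Fin (N+1) → Fin (M+1)),
    fun k => W ((Fintype.equivFin (Fin (N+1) → Fin (M+1))).symm k),
    fun k => ⟨(hWmono _).monotoneOn _, fun t _ => ⟨hW1 _ _, hWB _ _⟩⟩, ?_⟩
  intro v hv hvB
  -- the approximating element
  set V : ℕ → ℝ := fun j => if A j < Tmax then v (A j) else B with hV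
  have hVB : ∀ j, V j ≤ B := by
    intro j
    by_cases h : A j < Tmax
    · simp only [hV, if_pos h]
      exact (hvB _ ⟨hAnneg j, h⟩).2
    · simp only [hV, if_neg h, le_refl]
  have hVmono : ∀ j, V j ≤ V (j+1) := by
    intro j
    by_cases h : A (j+1) < Tmax
    · have h' : A j < Tmax := lt_of_le_of_lt (hAmono (Nat.le_succ j)) h
      simp only [hV, if_pos h, if_pos h']
      exact hv ⟨hAnneg j, h'⟩ ⟨hAnneg (j+1), h⟩ (hAmono (Nat.le_succ j))
    · simp only [hV, if_neg h]
      exact hVB j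
  have hVlast : V (N+1) = B := by
    simp only [hV, hANsucc, if_neg (lt_irrefl Tmax)]
  have hV0 : 1 ≤ V 0 := by
    have h : A 0 < Tmax := by rw [hA0]; exact hTmax
    simp only [hV, if_pos h]
    exact (hvB _ ⟨hAnneg 0, h⟩).1
  set cc : Fin (N+1) → Fin (M+1) := fun i =>
    ⟨min ⌊(v (A (i:ℕ)) - 1) / ε⌋₊ M, Nat.lt_succ_of_le (min_le_right _ _)⟩ with hcc
  set φ : ℝ → ℝ := fun t => ε + ∑ j ∈ Finset.range (N+1),
    Set.indicator (Set.Ioo (A j) (A (j+1))) (fun _ => V (j+1) - V j) t with hφ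
  -- pointwise bound
  have hpt : ∀ t ∈ D, |v t - W cc t| ≤ φ t := by
    intro t ht
    obtain ⟨ht0, htT⟩ := ht
    set J := Finset.univ.filter fun i : Fin (N+1) => A (i:ℕ) ≤ t with hJ
    have hJne : J.Nonempty := by
      refine ⟨⟨0, Nat.succ_pos N⟩, ?_⟩
      rw [hJ, Finset.mem_filter]
      exact ⟨Finset.mem_univ _, by rw [hA0]; exact ht0⟩
    set j := J.max' hJne with hj
    have hjt : A (j:ℕ) ≤ t := (Finset.mem_filter.mp (J.max'_mem hJne)).2
    have hjD : A (j:ℕ) ∈ D := ⟨hAnneg _, lt_of_le_of_lt hjt htT⟩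
    have htD : t ∈ D := ⟨ht0, htT⟩
    -- upper bound : W cc t ≤ v t
    have hsup_le : (J.sup fun i => ((cc i : ℕ))) ≤ ⌊(v t - 1)/ε⌋₊ := by
      refine Finset.sup_le fun i hi => ?_
      have hit : A (i:ℕ) ≤ t := (Finset.mem_filter.mp hi).2
      have hiD : A (i:ℕ) ∈ D := ⟨hAnneg _, lt_of_le_of_lt hit htT⟩
      calc (cc i : ℕ) ≤ ⌊(v (A (i:ℕ)) - 1)/ε⌋₊ := min_le_left _ _
        _ ≤ ⌊(v t - 1)/ε⌋₊ := by
            apply Nat.floor_mono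
            have := hv hiD htD hit
            gcongr
    have hWt : W cc t = 1 + ε * ((J.sup fun i => (cc i : ℕ) : ℕ) : ℝ) := by
      simp only [hW, hJ]
    have hWle : W cc t ≤ v t := by
      have h1 : (((J.sup fun i => (cc i : ℕ)) : ℕ) : ℝ) ≤ (⌊(v t - 1)/ε⌋₊ : ℝ) :=
        Nat.cast_le.2 hsup_le
      have h2 : (⌊(v t - 1)/ε⌋₊ : ℝ) ≤ (v t - 1)/ε :=
        Nat.floor_le (div_nonneg (by linarith [(hvB t htD).1]) hε.le)
      have h3 : ε * ((v t - 1)/ε) = v t - 1 := by field_simp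
      have h4 := mul_le_mul_of_nonneg_left (h1.trans h2) hε.le
      rw [h3] at h4
      rw [hWt]
      linarith
    -- lower bound : v (A j) - ε ≤ W cc t
    have hccj : ((cc j : ℕ)) = ⌊(v (A (j:ℕ)) - 1)/ε⌋₊ := by
      have hfl : ⌊(v (A (j:ℕ)) - 1)/ε⌋₊ ≤ M := by
        rw [hMdef]
        apply Nat.floor_mono
        have := (hvB _ hjD).2
        gcongr
      simp only [hcc]
      exact min_eq_left hfl
    have hWge : v (A (j:ℕ)) - ε ≤ W cc t := by
      have hle : (cc j : ℕ) ≤ J.sup fun i => (cc i : ℕ) :=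
        Finset.le_sup (f := fun i : Fin (N+1) => (cc i : ℕ)) (J.max'_mem hJne)
      have h3 : (v (A (j:ℕ)) - 1)/ε - 1 < (⌊(v (A (j:ℕ)) - 1)/ε⌋₊ : ℝ) :=
        Nat.sub_one_lt_floor _
      have h4 : ε * ((v (A (j:ℕ)) - 1)/ε) = v (A (j:ℕ)) - 1 := by field_simp
      have h5 : ((cc j : ℕ) : ℝ) ≤ ((J.sup fun i => (cc i : ℕ) : ℕ) : ℝ) := Nat.cast_le.2 hle
      rw [hccj] at h5
      have h6 := mul_lt_mul_of_pos_left (lt_of_lt_of_le h3 h5) hε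
      rw [mul_sub, mul_one, h4] at h6
      rw [hWt]
      linarith
    have habs : |v t - W cc t| = v t - W cc t := abs_of_nonneg (by linarith)
    rw [habs]
    have hnonneg : ∀ j' ∈ Finset.range (N+1),
        0 ≤ Set.indicator (Set.Ioo (A j') (A (j'+1))) (fun _ => V (j'+1) - V j') t :=
      fun j' _ => Set.indicator_nonneg (fun _ _ => sub_nonneg.2 (hVmono j')) t
    have hkey : v t - v (A (j:ℕ)) ≤ ∑ j' ∈ Finset.range (N+1),
        Set.indicator (Set.Ioo (A j') (A (j'+1))) (fun _ => V (j'+1) - V j') t := by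
      rcases eq_or_lt_of_le hjt with heq | hlt
      · rw [heq, sub_self]
        exact Finset.sum_nonneg hnonneg
      · have hjN : (j : ℕ) ≤ N := Nat.lt_succ_iff.mp j.isLt
        have htlt : t < A ((j:ℕ)+1) := by
          rcases lt_or_eq_of_le hjN with hjn | hjn
          · by_contra hcon
            push_neg at hcon
            have hmem : (⟨(j:ℕ)+1, by omega⟩ : Fin (N+1)) ∈ J :=
              Finset.mem_filter.mpr ⟨Finset.mem_univ _, hcon⟩
            have hle := J.le_max' _ hmem
            have h7 : (j:ℕ) + 1 ≤ (j:ℕ) := hle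
            omega
          · have : A ((j:ℕ)+1) = Tmax := by
              simp only [hA, if_neg (by omega : ¬ (j:ℕ)+1 ≤ N)]
            rw [this]
            exact htT
        have hmem : t ∈ Set.Ioo (A (j:ℕ)) (A ((j:ℕ)+1)) := ⟨hlt, htlt⟩
        have hsingle : Set.indicator (Set.Ioo (A (j:ℕ)) (A ((j:ℕ)+1)))
            (fun _ => V ((j:ℕ)+1) - V (j:ℕ)) t ≤ ∑ j' ∈ Finset.range (N+1),
            Set.indicator (Set.Ioo (A j') (A (j'+1))) (fun _ => V (j'+1) - V j') t :=
          Finset.single_le_sum hnonneg (Finset.mem_range.2 (by omega))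
        rw [Set.indicator_of_mem hmem] at hsingle
        have hVj : V (j:ℕ) = v (A (j:ℕ)) := by
          simp only [hV, if_pos hjD.2]
        have hVj1 : v t ≤ V ((j:ℕ)+1) := by
          by_cases h : A ((j:ℕ)+1) < Tmax
          · simp only [hV, if_pos h]
            exact hv htD ⟨hAnneg _, h⟩ htlt.le
          · simp only [hV, if_neg h]
            exact (hvB t htD).2
        linarith
    calc v t - W cc t ≤ v t - (v (A (j:ℕ)) - ε) := by linarith
      _ = ε + (v t - v (A (j:ℕ))) := by ring
      _ ≤ ε + ∑ j' ∈ Finset.range (N+1),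
          Set.indicator (Set.Ioo (A j') (A (j'+1))) (fun _ => V (j'+1) - V j') t := by
          linarith
      _ = φ t := rfl
  -- integrability
  have hsumint : Integrable (fun t => ∑ j ∈ Finset.range (N+1),
      Set.indicator (Set.Ioo (A j) (A (j+1))) (fun _ => V (j+1) - V j) t) μ := by
    apply integrable_finset_sum
    intro j _
    exact (integrable_const _).indicator measurableSet_Ioo
  have hφint : Integrable φ μ := by
    simp only [hφ]
    exact (integrable_const ε).add hsumint
  -- the integral bound
  have hint1 : ∫ t, |v t - W cc t| ∂μ ≤ ∫ t, φ t ∂μ := by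
    refine integral_mono_of_nonneg (ae_of_all _ fun t => abs_nonneg _) hφint ?_
    rw [hμ]
    exact (ae_restrict_iff' hDmeas).2 (ae_of_all _ hpt)
  have hφval : ∫ t, φ t ∂μ = Creal * ε + ∑ j ∈ Finset.range (N+1),
      (μ (Set.Ioo (A j) (A (j+1)))).toReal * (V (j+1) - V j) := by
    simp only [hφ]
    rw [integral_add (integrable_const ε) hsumint, integral_const,
      integral_finset_sum _ (fun j _ => (integrable_const _).indicator measurableSet_Ioo)]
    simp only [smul_eq_mul, integral_indicator_const _ measurableSet_Ioo]
    try rw [hCreal]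
    rfl
  have hIooR : ∀ j ∈ Finset.range (N+1), (μ (Set.Ioo (A j) (A (j+1)))).toReal ≤ Creal / N := by
    intro j hj
    have h := hIoo j (Nat.lt_succ_iff.mp (Finset.mem_range.mp hj))
    have h2 := ENNReal.toReal_mono hcne h
    rwa [hc, ENNReal.toReal_div, show ((N:ℝ≥0∞)).toReal = (N:ℝ) from rfl] at h2
  have hsumbd : ∑ j ∈ Finset.range (N+1),
      (μ (Set.Ioo (A j) (A (j+1)))).toReal * (V (j+1) - V j) ≤ Creal / N * (B - 1) := by
    calc ∑ j ∈ Finset.range (N+1), (μ (Set.Ioo (A j) (A (j+1)))).toReal * (V (j+1) - V j)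
        ≤ ∑ j ∈ Finset.range (N+1), Creal / N * (V (j+1) - V j) :=
          Finset.sum_le_sum fun j hj =>
            mul_le_mul_of_nonneg_right (hIooR j hj) (sub_nonneg.2 (hVmono j))
      _ = Creal / N * (V (N+1) - V 0) := by
          rw [← Finset.mul_sum, Finset.sum_range_sub]
      _ ≤ Creal / N * (B - 1) := by
          apply mul_le_mul_of_nonneg_left _ (by positivity)
          rw [hVlast]
          linarith
  -- final numeric bound
  have hNge : 2 * (B - 1) * (Creal + 1) / δ ≤ (N:ℝ) := by
    calc 2 * (B - 1) * (Creal + 1) / δ ≤ (⌈2 * (B - 1) * (Creal + 1) / δ⌉₊ : ℝ) := Nat.le_ceil _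
      _ ≤ (N:ℝ) := by rw [hNdef]; exact_mod_cast Nat.le_succ _
  have hNpos : (0:ℝ) < N := by exact_mod_cast hN
  have h2 : 2 * (B - 1) * (Creal + 1) ≤ δ * N := by
    rw [div_le_iff₀ hδ] at hNge
    linarith
  clear_value φ cc V W A c M N ε Creal μ D
  have e1 : Creal * ε ≤ δ / 2 := by
    rw [hεdef, mul_div_assoc']
    rw [div_le_div_iff₀ (by positivity) (by norm_num : (0:ℝ) < 2)]
    nlinarith
  have e2 : Creal / N * (B - 1) ≤ δ / 2 := by
    rw [div_mul_eq_mul_div, div_le_div_iff₀ hNpos (by norm_num : (0:ℝ) < 2)]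
    nlinarith
  refine ⟨(Fintype.equivFin (Fin (N+1) → Fin (M+1))) cc, ?_⟩
  simp only [Equiv.symm_apply_apply]
  calc ∫ t, |v t - W cc t| ∂μ ≤ ∫ t, φ t ∂μ := hint1
    _ = Creal * ε + ∑ j ∈ Finset.range (N+1),
        (μ (Set.Ioo (A j) (A (j+1)))).toReal * (V (j+1) - V j) := hφval
    _ ≤ δ / 2 + δ / 2 := add_le_add e1 (hsumbd.trans e2)
    _ = δ := by ring
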